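/- Let φ1, φ2, X1, X2 be positive reals and β ∈ (0,1], and suppose φ2·X1 ≤ φ1·X2 and 1 − √(φ1·X1·X2/φ2) ≤ X2 (Case 2 condition). Then the function F(τ) = φ2·(1 − 1/(2·(X2 + β·τ))) + √( φ1·φ2·(X1 − τ)/(X2 + β·τ) ) is nonincreasing on [0, X1). (In Case 2, no positive transfer increases the alliance payoff.) -/

import Mathlib

noncomputable section

lemma case2_key_poly (φ1 φ2 X1 X2 β : ℝ)
    (hφ1 : 0 < φ1) (hφ2 : 0 < φ2) (hX1 : 0 < X1) (hX2 : 0 < X2)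
    (hβ0 : 0 < β) (hβ1 : β ≤ 1)
    (hord : φ2 * X1 ≤ φ1 * X2)
    (hcase2 : 1 - Real.sqrt (φ1 * X1 * X2 / φ2) ≤ X2) :
    β ^ 2 * (φ2 * X1) ≤ φ1 * X2 * (X2 + β * X1) ^ 2 := by
  set s := Real.sqrt (φ1 * X1 * X2 / φ2) with hs
  have hs0 : 0 ≤ s := Real.sqrt_nonneg _
  have hs2 : s ^ 2 = φ1 * X1 * X2 / φ2 := Real.sq_sqrt (by positivity)
  have hs2' : φ2 * s ^ 2 = φ1 * X1 * X2 := by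
    rw [hs2]; field_simp
  have h1 : φ2 * s ≤ φ1 * X2 := by
    apply le_of_pow_le_pow_left₀ two_ne_zero (by positivity)
    have e : (φ2 * s) ^ 2 = φ2 * (φ2 * s ^ 2) := by ring
    rw [e, hs2']
    nlinarith [mul_le_mul_of_nonneg_left hord (le_of_lt (mul_pos hφ1 hX2))]
  have h2 : β * (φ2 * s) * (1 - s) ≤ φ1 * X2 ^ 2 := by
    rcases le_or_gt 1 s with h | h
    · nlinarith [mul_nonneg (mul_nonneg hβ0.le hφ2.le) hs0]
    · have hX2s : 1 - s ≤ X2 := hcase2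
      have ha1 : β * (φ2 * s) * (1 - s) ≤ (φ2 * s) * (1 - s) := by
        nlinarith [mul_nonneg (mul_nonneg hφ2.le hs0) (sub_nonneg.2 h.le)]
      have ha2 : (φ2 * s) * (1 - s) ≤ (φ1 * X2) * (1 - s) :=
        mul_le_mul_of_nonneg_right h1 (sub_nonneg.2 h.le)
      have ha3 : (φ1 * X2) * (1 - s) ≤ (φ1 * X2) * X2 :=
        mul_le_mul_of_nonneg_left hX2s (by positivity)
      nlinarith [ha1, ha2, ha3]
  have h3 : β * (φ2 * s) ≤ φ1 * X2 * (X2 + β * X1) := by nlinarith [h2, hs2', hβ0]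
  have h4 : (β * (φ2 * s)) ^ 2 ≤ (φ1 * X2 * (X2 + β * X1)) ^ 2 :=
    pow_le_pow_left₀ (by positivity) h3 2
  have h5 : β ^ 2 * φ2 * (φ1 * X1 * X2) ≤ (φ1 * X2 * (X2 + β * X1)) ^ 2 := by
    have e : (β * (φ2 * s)) ^ 2 = β ^ 2 * φ2 * (φ2 * s ^ 2) := by ring
    rw [e, hs2'] at h4
    exact h4
  have e1 : (φ1 * X2) * (β ^ 2 * (φ2 * X1)) = β ^ 2 * φ2 * (φ1 * X1 * X2) := by ring
  have e2 : (φ1 * X2) * (φ1 * X2 * (X2 + β * X1) ^ 2) = (φ1 * X2 * (X2 + β * X1)) ^ 2 := by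
    ring
  exact le_of_mul_le_mul_left (by rw [e1, e2]; exact h5) (mul_pos hφ1 hX2)

/-- In Case 2, no positive transfer increases the alliance payoff. -/
theorem case2_alliance_antitone_pos (φ1 φ2 X1 X2 β : ℝ)
    (hφ1 : 0 < φ1) (hφ2 : 0 < φ2) (hX1 : 0 < X1) (hX2 : 0 < X2)
    (hβ0 : 0 < β) (hβ1 : β ≤ 1)
    (hord : φ2 * X1 ≤ φ1 * X2)
    (hcase2 : 1 - Real.sqrt (φ1 * X1 * X2 / φ2) ≤ X2) :
    AntitoneOn (fun τ : ℝ => φ2 * (1 - 1 / (2 * (X2 + β * τ))) +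
        Real.sqrt (φ1 * φ2 * (X1 - τ) / (X2 + β * τ)))
      (Set.Ico 0 X1) := by
  have key := case2_key_poly φ1 φ2 X1 X2 β hφ1 hφ2 hX1 hX2 hβ0 hβ1 hord hcase2
  set F : ℝ → ℝ := fun τ => φ2 * (1 - 1 / (2 * (X2 + β * τ))) +
      Real.sqrt (φ1 * φ2 * (X1 - τ) / (X2 + β * τ)) with hFdef
  set F' : ℝ → ℝ := fun x =>
      (φ2 * β * Real.sqrt (φ1 * φ2 * (X1 - x) / (X2 + β * x)) - φ1 * φ2 * (X2 + β * X1)) /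
        (2 * Real.sqrt (φ1 * φ2 * (X1 - x) / (X2 + β * x)) * (X2 + β * x) ^ 2) with hF'def
  have hint : interior (Set.Ico (0:ℝ) X1) = Set.Ioo 0 X1 := interior_Ico
  apply antitoneOn_of_hasDerivWithinAt_nonpos (f' := F') (convex_Ico 0 X1)
  · -- continuity on Ico
    intro x hx
    have hYx : 0 < X2 + β * x := by
      have := hx.1
      nlinarith [mul_nonneg hβ0.le hx.1]
    have h2Yx : (2 * (X2 + β * x)) ≠ 0 := by positivity
    apply ContinuousAt.continuousWithinAt
    apply ContinuousAt.add
    · exact (continuousAt_const.mul (continuousAt_const.sub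
        (continuousAt_const.div (by fun_prop) h2Yx)))
    · exact (Real.continuous_sqrt.continuousAt).comp
        (ContinuousAt.div (by fun_prop) (by fun_prop) (ne_of_gt hYx))
  · -- derivative
    rw [hint]
    intro x hx
    have hx0 : 0 < x := hx.1
    have hx1 : x < X1 := hx.2
    have hYx : 0 < X2 + β * x := by nlinarith
    have hA : 0 < X1 - x := by linarith
    have hgpos : 0 < φ1 * φ2 * (X1 - x) / (X2 + β * x) := by positivity
    have hsq : 0 < Real.sqrt (φ1 * φ2 * (X1 - x) / (X2 + β * x)) :=
      Real.sqrt_pos.2 hgpos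
    -- derivative of inner pieces
    have hY : HasDerivAt (fun τ : ℝ => X2 + β * τ) β x := by
      simpa using ((hasDerivAt_id x).const_mul β).const_add X2
    have h2Y : HasDerivAt (fun τ : ℝ => 2 * (X2 + β * τ)) (2 * β) x := hY.const_mul 2
    have hinv : HasDerivAt (fun τ : ℝ => 1 / (2 * (X2 + β * τ)))
        ((0 * (2 * (X2 + β * x)) - 1 * (2 * β)) / (2 * (X2 + β * x)) ^ 2) x :=
      (hasDerivAt_const x (1:ℝ)).div h2Y (by positivity)
    have hterm1 : HasDerivAt (fun τ : ℝ => φ2 * (1 - 1 / (2 * (X2 + β * τ))))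
        (φ2 * (0 - (0 * (2 * (X2 + β * x)) - 1 * (2 * β)) / (2 * (X2 + β * x)) ^ 2)) x :=
      ((hasDerivAt_const x (1:ℝ)).sub hinv).const_mul φ2
    have hnum : HasDerivAt (fun τ : ℝ => φ1 * φ2 * (X1 - τ)) (φ1 * φ2 * (0 - 1)) x := by
      exact (((hasDerivAt_const x X1).sub (hasDerivAt_id x))).const_mul (φ1 * φ2)
    have hg : HasDerivAt (fun τ : ℝ => φ1 * φ2 * (X1 - τ) / (X2 + β * τ))
        ((φ1 * φ2 * (0 - 1) * (X2 + β * x) - φ1 * φ2 * (X1 - x) * β) / (X2 + β * x) ^ 2) x :=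
      hnum.div hY (ne_of_gt hYx)
    have hsqrtD : HasDerivAt (fun τ : ℝ => Real.sqrt (φ1 * φ2 * (X1 - τ) / (X2 + β * τ)))
        (((φ1 * φ2 * (0 - 1) * (X2 + β * x) - φ1 * φ2 * (X1 - x) * β) / (X2 + β * x) ^ 2) /
          (2 * Real.sqrt (φ1 * φ2 * (X1 - x) / (X2 + β * x)))) x :=
      hg.sqrt (ne_of_gt hgpos)
    have hFD : HasDerivAt F (F' x) x := by
      have h := hterm1.add hsqrtD
      refine HasDerivAt.congr_deriv h ?_
      symm
      rw [hF'def]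
      have hsne : Real.sqrt (φ1 * φ2 * (X1 - x) / (X2 + β * x)) ≠ 0 := ne_of_gt hsq
      have hYne : (X2 + β * x) ≠ 0 := ne_of_gt hYx
      field_simp
      ring
    exact hFD.hasDerivWithinAt
  · -- derivative nonpositive
    rw [hint]
    intro x hx
    have hx0 : 0 < x := hx.1
    have hx1 : x < X1 := hx.2
    have hYx : 0 < X2 + β * x := by nlinarith
    have hA : 0 < X1 - x := by linarith
    have hgpos : 0 < φ1 * φ2 * (X1 - x) / (X2 + β * x) := by positivity
    have hsq : 0 < Real.sqrt (φ1 * φ2 * (X1 - x) / (X2 + β * x)) :=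
      Real.sqrt_pos.2 hgpos
    -- numerator nonpositive
    have step : β ^ 2 * (φ2 * (X1 - x)) ≤ φ1 * (X2 + β * X1) ^ 2 * (X2 + β * x) := by
      have h1 : β ^ 2 * (φ2 * (X1 - x)) ≤ β ^ 2 * (φ2 * X1) := by
        nlinarith [mul_nonneg (sq_nonneg β) (mul_pos hφ2 hx0).le]
      have h2 : φ1 * X2 * (X2 + β * X1) ^ 2 ≤ φ1 * (X2 + β * X1) ^ 2 * (X2 + β * x) := by
        nlinarith [mul_nonneg (mul_nonneg hφ1.le (sq_nonneg (X2 + β * X1)))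
          (mul_nonneg hβ0.le hx0.le)]
      linarith
    have hnum : φ2 * β * Real.sqrt (φ1 * φ2 * (X1 - x) / (X2 + β * x)) ≤
        φ1 * φ2 * (X2 + β * X1) := by
      apply le_of_pow_le_pow_left₀ two_ne_zero (by positivity)
      rw [mul_pow, Real.sq_sqrt hgpos.le, ← mul_div_assoc, div_le_iff₀ hYx]
      have hmul := mul_le_mul_of_nonneg_left step
        (show (0:ℝ) ≤ φ1 * φ2 ^ 2 by positivity)
      calc (φ2 * β) ^ 2 * (φ1 * φ2 * (X1 - x))
          = φ1 * φ2 ^ 2 * (β ^ 2 * (φ2 * (X1 - x))) := by ring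
        _ ≤ φ1 * φ2 ^ 2 * (φ1 * (X2 + β * X1) ^ 2 * (X2 + β * x)) := hmul
        _ = (φ1 * φ2 * (X2 + β * X1)) ^ 2 * (X2 + β * x) := by ring
    apply div_nonpos_of_nonpos_of_nonneg
    · linarith
    · positivity
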